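/- Let s = σ + it be a complex number with 0 < σ < 1 and |t| > 1. Then for every a ∈ (0,1), the series ∑_{k=1}^∞ k^{-s} e^{2πika} converges and its sum equals F_s(a), the value at a of the analytic continuation of the periodized zeta function. -/

import Mathlib

open MeasureTheory Complex Real Set Filter

/-- The periodized zeta function `F s a`, i.e. the analytic continuation in `s` of
`∑ k ≥ 1, exp (2πika) / k ^ s`, realized as Mathlib's `expZeta` at the point `a` of the
unit additive circle. -/
noncomputable def periodizedZeta (s : ℂ) (a : ℝ) : ℂ := HurwitzZeta.expZeta (a : UnitAddCircle) s

namespace PZaux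

/-- Partial exponential sums. -/
noncomputable def A (a : ℝ) (K : ℕ) : ℂ :=
  ∑ k ∈ Finset.Icc 1 K, Complex.exp (2 * π * Complex.I * k * a)

/-- Terms of the Abel-summed series. -/
noncomputable def g (a : ℝ) (k : ℕ) (s : ℂ) : ℂ :=
  A a k * ((k : ℂ) ^ (-s) - ((k + 1 : ℕ) : ℂ) ^ (-s))

/-- The Abel-summed series. -/
noncomputable def G (a : ℝ) (s : ℂ) : ℂ := ∑' k, g a k s

/-- The bound for the exponential sums. -/
noncomputable def C (a : ℝ) : ℝ := 2 / ‖Complex.exp (2 * π * Complex.I * a) - 1‖ + 1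

lemma exp_ne_one {a : ℝ} (ha : a ∈ Set.Ioo (0 : ℝ) 1) :
    Complex.exp (2 * π * Complex.I * a) ≠ 1 := by
  intro h
  rw [Complex.exp_eq_one_iff] at h
  obtain ⟨n, hn⟩ := h
  have hI : (2 * (π : ℂ) * Complex.I) ≠ 0 := by
    simp [Real.pi_ne_zero, Complex.I_ne_zero]
  have : (a : ℂ) = (n : ℂ) := by
    have h2 : (2 * (π : ℂ) * Complex.I) * a = (2 * (π : ℂ) * Complex.I) * n := by
      linear_combination hn
    exact mul_left_cancel₀ hI h2
  have : a = (n : ℝ) := by exact_mod_cast this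
  rcases ha with ⟨h0, h1⟩
  rw [this] at h0 h1
  have : (0 : ℤ) < n := by exact_mod_cast h0
  have : (n : ℤ) < 1 := by exact_mod_cast h1
  omega

lemma C_pos (a : ℝ) : 0 < C a := by
  have : 0 ≤ 2 / ‖Complex.exp (2 * π * Complex.I * a) - 1‖ := by positivity
  simp only [C]; linarith

lemma norm_A_le {a : ℝ} (ha : a ∈ Set.Ioo (0 : ℝ) 1) (K : ℕ) : ‖A a K‖ ≤ C a := by
  set z : ℂ := Complex.exp (2 * π * Complex.I * a) with hz
  have hz1 : z ≠ 1 := exp_ne_one ha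
  have hzabs : ‖z‖ = 1 := by
    rw [hz, Complex.norm_exp]
    norm_num
  have hterm : ∀ k : ℕ, Complex.exp (2 * π * Complex.I * k * a) = z ^ k := by
    intro k
    rw [hz, ← Complex.exp_nat_mul]
    ring_nf
  have hA : A a K = (∑ i ∈ Finset.range (K + 1), z ^ i) - 1 := by
    rw [A]
    simp_rw [hterm]
    rw [Finset.range_eq_Ico, ← Finset.Ico_add_one_right_eq_Icc]
    rw [Finset.sum_eq_sum_Ico_succ_bot (Nat.succ_pos K)]
    simp
  have hgeom : (∑ i ∈ Finset.range (K + 1), z ^ i) = (z ^ (K + 1) - 1) / (z - 1) := by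
    rw [geom_sum_eq hz1]
  have hzpos : 0 < ‖z - 1‖ := by
    rw [norm_pos_iff]
    exact sub_ne_zero.mpr hz1
  have h1 : ‖(z ^ (K + 1) - 1) / (z - 1)‖ ≤ 2 / ‖z - 1‖ := by
    rw [norm_div]
    gcongr
    calc ‖z ^ (K + 1) - 1‖ ≤ ‖z ^ (K + 1)‖ + ‖(1 : ℂ)‖ := norm_sub_le _ _
    _ = 2 := by rw [norm_pow, hzabs]; norm_num
  calc ‖A a K‖ ≤ ‖∑ i ∈ Finset.range (K + 1), z ^ i‖ + ‖(1 : ℂ)‖ := by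
        rw [hA]; exact norm_sub_le _ _
  _ ≤ 2 / ‖z - 1‖ + 1 := by rw [hgeom, norm_one]; exact add_le_add h1 le_rfl
  _ = C a := rfl


lemma partial_eq (a : ℝ) (s : ℂ) (K : ℕ) :
    ∑ k ∈ Finset.Icc 1 K, (k : ℂ) ^ (-s) * Complex.exp (2 * π * Complex.I * k * a) =
      (∑ k ∈ Finset.range K, g a k s) + A a K * (K : ℂ) ^ (-s) := by
  induction K with
  | zero => simp [A]
  | succ K ih =>
      rw [Finset.sum_Icc_succ_top (Nat.one_le_iff_ne_zero.mpr (Nat.succ_ne_zero K)), ih,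
        Finset.sum_range_succ]
      have hA : A a (K + 1) = A a K + Complex.exp (2 * π * Complex.I * (K + 1 : ℕ) * a) :=
        Finset.sum_Icc_succ_top (Nat.one_le_iff_ne_zero.mpr (Nat.succ_ne_zero K)) _
      rw [hA, g]
      push_cast
      ring

lemma norm_cpow_diff_le {k : ℕ} (hk : 1 ≤ k) {s : ℂ} (hs : 0 < s.re) :
    ‖(k : ℂ) ^ (-s) - ((k + 1 : ℕ) : ℂ) ^ (-s)‖ ≤ ‖s‖ * (k : ℝ) ^ (-(s.re + 1)) := by
  have hk0 : (0 : ℝ) < k := by exact_mod_cast hk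
  have key := Convex.norm_image_sub_le_of_norm_hasDerivWithin_le
    (f := fun t : ℝ => ((t : ℂ)) ^ (-s)) (f' := fun t : ℝ => -s * ((t : ℂ)) ^ (-s - 1))
    (s := Set.Icc (k : ℝ) ((k : ℝ) + 1)) (C := ‖s‖ * (k : ℝ) ^ (-(s.re + 1)))
    ?_ ?_ (convex_Icc _ _) (Set.left_mem_Icc.mpr (by linarith)) (Set.right_mem_Icc.mpr (by linarith))
  · have h1 : ((k : ℝ) + 1 : ℝ) - (k : ℝ) = 1 := by ring
    rw [Real.norm_eq_abs, h1, abs_one, mul_one] at key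
    rw [norm_sub_rev]
    push_cast at key ⊢
    exact key
  · intro t ht
    have ht0 : 0 < t := lt_of_lt_of_le hk0 ht.1
    have := (Complex.hasStrictDerivAt_cpow_const (c := -s)
      (x := (t : ℂ)) (Complex.ofReal_mem_slitPlane.mpr ht0)).hasDerivAt.comp_ofReal
    exact this.hasDerivWithinAt
  · intro t ht
    have ht0 : 0 < t := lt_of_lt_of_le hk0 ht.1
    rw [norm_mul, norm_neg]
    gcongr
    have : ‖((t : ℝ) : ℂ) ^ (-s - 1)‖ = t ^ (-s - 1).re := by
      rw [Complex.norm_cpow_eq_rpow_re_of_pos ht0]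
    rw [this]
    have hre : (-s - 1).re = -(s.re + 1) := by simp; ring
    rw [hre]
    exact Real.rpow_le_rpow_of_nonpos hk0 ht.1 (by linarith)

lemma norm_g_le {a : ℝ} (ha : a ∈ Set.Ioo (0 : ℝ) 1) (k : ℕ) {s : ℂ} (hs : 0 < s.re) :
    ‖g a k s‖ ≤ (C a * ‖s‖) * (k : ℝ) ^ (-(s.re + 1)) := by
  rcases Nat.eq_zero_or_pos k with rfl | hk
  · have h0 : g a 0 s = 0 := by simp [g, A]
    have h1 : ((0 : ℕ) : ℝ) ^ (-(s.re + 1)) = 0 := by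
      rw [Nat.cast_zero, Real.zero_rpow (ne_of_lt (by linarith))]
    rw [h0, norm_zero, h1, mul_zero]
  · rw [g, norm_mul, mul_assoc]
    exact mul_le_mul (norm_A_le ha k) (norm_cpow_diff_le hk hs) (norm_nonneg _) (C_pos a).le


lemma summable_g {a : ℝ} (ha : a ∈ Set.Ioo (0 : ℝ) 1) {s : ℂ} (hs : 0 < s.re) :
    Summable (fun k : ℕ => g a k s) := by
  apply Summable.of_norm_bounded (g := fun k : ℕ => (C a * ‖s‖) * (k : ℝ) ^ (-(s.re + 1)))
  · exact (Real.summable_nat_rpow.mpr (by linarith)).mul_left _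
  · exact fun k => norm_g_le ha k hs

lemma tendsto_tail {a : ℝ} (ha : a ∈ Set.Ioo (0 : ℝ) 1) {s : ℂ} (hs : 0 < s.re) :
    Filter.Tendsto (fun K : ℕ => A a K * (K : ℂ) ^ (-s)) Filter.atTop (nhds 0) := by
  apply squeeze_zero_norm (a := fun K : ℕ => C a * (K : ℝ) ^ (-s.re))
  · intro K
    rw [norm_mul]
    have hnorm : ‖(K : ℂ) ^ (-s)‖ = (K : ℝ) ^ (-s.re) := by
      rw [show ((K : ℕ) : ℂ) = (((K : ℝ) : ℝ) : ℂ) by push_cast; rfl,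
        Complex.norm_cpow_eq_rpow_re_of_nonneg (Nat.cast_nonneg K) (by simpa using (ne_of_lt hs).symm)]
      simp
    rw [hnorm]
    exact mul_le_mul_of_nonneg_right (norm_A_le ha K) (Real.rpow_nonneg (Nat.cast_nonneg K) _)
  · have h1 : Filter.Tendsto (fun K : ℕ => (K : ℝ) ^ (-s.re)) Filter.atTop (nhds 0) :=
      (tendsto_rpow_neg_atTop hs).comp tendsto_natCast_atTop_atTop
    simpa using h1.const_mul (C a)

lemma tendsto_partial {a : ℝ} (ha : a ∈ Set.Ioo (0 : ℝ) 1) {s : ℂ} (hs : 0 < s.re) :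
    Filter.Tendsto
      (fun K : ℕ => ∑ k ∈ Finset.Icc 1 K,
        (k : ℂ) ^ (-s) * Complex.exp (2 * π * Complex.I * k * a))
      Filter.atTop (nhds (G a s)) := by
  simp_rw [partial_eq a s]
  have h1 := (summable_g ha hs).hasSum.tendsto_sum_nat
  have h2 := h1.add (tendsto_tail ha hs)
  simpa [G] using h2


lemma differentiableOn_G {a : ℝ} (ha : a ∈ Set.Ioo (0 : ℝ) 1) :
    DifferentiableOn ℂ (G a) {s : ℂ | 0 < s.re} := by
  intro s₀ hs₀
  have hs₀' : 0 < s₀.re := hs₀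
  set δ : ℝ := s₀.re / 2 with hδdef
  have hδ : 0 < δ := half_pos hs₀'
  have hball : Metric.ball s₀ δ ⊆ {s : ℂ | 0 < s.re} := by
    intro w hw
    have h1 : |(w - s₀).re| ≤ ‖w - s₀‖ := Complex.abs_re_le_norm _
    have h2 : ‖w - s₀‖ < δ := by
      rw [← Complex.dist_eq]; exact hw
    have h3 : |w.re - s₀.re| < δ := by
      rw [Complex.sub_re] at h1; linarith [h1.trans_lt h2]
    have := abs_lt.mp h3
    simp only [Set.mem_setOf_eq]
    linarith [this.1]
  have hdiff : DifferentiableOn ℂ (fun w : ℂ => ∑' k : ℕ, g a k w) (Metric.ball s₀ δ) := by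
    apply differentiableOn_tsum_of_summable_norm
      (u := fun k : ℕ => (C a * (‖s₀‖ + δ)) * (k : ℝ) ^ (-(δ + 1)))
    · exact (Real.summable_nat_rpow.mpr (by linarith)).mul_left _
    · intro k
      rcases Nat.eq_zero_or_pos k with rfl | hk
      · have h0 : g a 0 = fun _ : ℂ => 0 := by
          funext w; simp [g, A]
        rw [h0]
        exact differentiableOn_const 0
      · have hk0 : ((k : ℕ) : ℂ) ≠ 0 := Nat.cast_ne_zero.mpr (Nat.pos_iff_ne_zero.mp hk)
        have hk1 : (((k + 1) : ℕ) : ℂ) ≠ 0 := Nat.cast_ne_zero.mpr (Nat.succ_ne_zero k)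
        exact (((differentiable_id.neg.const_cpow (Or.inl hk0)).sub
          (differentiable_id.neg.const_cpow (Or.inl hk1))).const_mul (A a k)).differentiableOn
    · exact Metric.isOpen_ball
    · intro k w hw
      have hwre : 0 < w.re := hball hw
      have hwδ : δ < w.re := by
        have h1 : |(w - s₀).re| ≤ ‖w - s₀‖ := Complex.abs_re_le_norm _
        have h2 : ‖w - s₀‖ < δ := by rw [← Complex.dist_eq]; exact hw
        have h3 : |w.re - s₀.re| < δ := by
          rw [Complex.sub_re] at h1; linarith [h1.trans_lt h2]
        have := abs_lt.mp h3
        have : s₀.re - δ < w.re := by linarith [this.1]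
        simpa [hδdef] using by linarith
      have hwnorm : ‖w‖ ≤ ‖s₀‖ + δ := by
        have : ‖w - s₀‖ < δ := by rw [← dist_eq_norm]; exact hw
        calc ‖w‖ = ‖s₀ + (w - s₀)‖ := by ring_nf
        _ ≤ ‖s₀‖ + ‖w - s₀‖ := norm_add_le _ _
        _ ≤ ‖s₀‖ + δ := by linarith
      rcases Nat.eq_zero_or_pos k with rfl | hk
      · have h0 : g a 0 w = 0 := by simp [g, A]
        have h1 : ((0 : ℕ) : ℝ) ^ (-(δ + 1)) = 0 := by
          rw [Nat.cast_zero, Real.zero_rpow (ne_of_lt (by linarith))]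
        rw [h0, norm_zero, h1, mul_zero]
      · have hb := norm_g_le ha k hwre
        have hk1 : (1 : ℝ) ≤ (k : ℝ) := by exact_mod_cast hk
        have hmono : (k : ℝ) ^ (-(w.re + 1)) ≤ (k : ℝ) ^ (-(δ + 1)) :=
          Real.rpow_le_rpow_of_exponent_le hk1 (by linarith)
        calc ‖g a k w‖ ≤ (C a * ‖w‖) * (k : ℝ) ^ (-(w.re + 1)) := hb
        _ ≤ (C a * (‖s₀‖ + δ)) * (k : ℝ) ^ (-(δ + 1)) := by
            apply mul_le_mul
            · exact mul_le_mul_of_nonneg_left hwnorm (C_pos a).le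
            · exact hmono
            · exact Real.rpow_nonneg (Nat.cast_nonneg k) _
            · exact mul_nonneg (C_pos a).le (by positivity)
  have := hdiff.differentiableAt (Metric.ball_mem_nhds s₀ hδ)
  exact this.differentiableWithinAt

lemma coe_ne_zero {a : ℝ} (ha : a ∈ Set.Ioo (0 : ℝ) 1) : (a : UnitAddCircle) ≠ 0 := by
  intro h
  rw [AddCircle.coe_eq_zero_iff] at h
  obtain ⟨n, hn⟩ := h
  have : (n : ℝ) = a := by simpa using hn
  rcases ha with ⟨h0, h1⟩
  rw [← this] at h0 h1
  have h0' : (0 : ℤ) < n := by exact_mod_cast h0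
  have h1' : n < 1 := by exact_mod_cast h1
  omega

lemma eq_on_one_lt {a : ℝ} (ha : a ∈ Set.Ioo (0 : ℝ) 1) {s : ℂ} (hs : 1 < s.re) :
    HurwitzZeta.expZeta (a : UnitAddCircle) s = G a s := by
  have hs0 : 0 < s.re := by linarith
  have hsne : s ≠ 0 := by
    intro h; rw [h] at hs0; simp at hs0
  have h1 := (HurwitzZeta.hasSum_expZeta_of_one_lt_re a hs).tendsto_sum_nat
  have h2 : Filter.Tendsto
      (fun K : ℕ => ∑ n ∈ Finset.range (K + 1), Complex.exp (2 * π * Complex.I * a * n) / (n : ℂ) ^ s)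
      Filter.atTop (nhds (HurwitzZeta.expZeta (a : UnitAddCircle) s)) :=
    h1.comp (tendsto_add_atTop_nat 1)
  have h3 : ∀ K : ℕ, ∑ n ∈ Finset.range (K + 1), Complex.exp (2 * π * Complex.I * a * n) / (n : ℂ) ^ s
      = ∑ k ∈ Finset.Icc 1 K, (k : ℂ) ^ (-s) * Complex.exp (2 * π * Complex.I * k * a) := by
    intro K
    rw [Finset.range_eq_Ico, Finset.sum_eq_sum_Ico_succ_bot (Nat.succ_pos K)]
    rw [show ((0 : ℕ) : ℂ) ^ s = 0 from by rw [Nat.cast_zero, Complex.zero_cpow hsne]]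
    rw [div_zero, zero_add, ← Finset.Ico_add_one_right_eq_Icc]
    apply Finset.sum_congr rfl
    intro k _
    rw [Complex.cpow_neg, div_eq_mul_inv, mul_comm]
    congr 2
    ring
  simp_rw [h3] at h2
  exact tendsto_nhds_unique h2 (tendsto_partial ha hs0)

end PZaux



/-- for `0 < Re s < 1`, `|Im s| > 1` and `a ∈ (0,1)`, the partial sums of the
series `∑_{k≥1} k^{-s} e^{2πika}` converge to `F_s(a)`. -/
theorem periodizedZeta_eq_sum (s : ℂ) (hσ0 : 0 < s.re) (hσ1 : s.re < 1) (ht : 1 < |s.im|)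
    (a : ℝ) (ha : a ∈ Set.Ioo (0 : ℝ) 1) :
    Filter.Tendsto
      (fun K : ℕ => ∑ k ∈ Finset.Icc 1 K, (k : ℂ) ^ (-s) * Complex.exp (2 * π * Complex.I * k * a))
      Filter.atTop (nhds (periodizedZeta s a)) := by
  have hs1 : 0 < s.re := hσ0
  have hU : IsOpen {z : ℂ | 0 < z.re} := isOpen_lt continuous_const Complex.continuous_re
  have hconn : IsPreconnected {z : ℂ | 0 < z.re} := (convex_halfSpace_re_gt 0).isPreconnected
  have hF : AnalyticOnNhd ℂ (HurwitzZeta.expZeta (a : UnitAddCircle)) {z : ℂ | 0 < z.re} :=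
    ((HurwitzZeta.differentiable_expZeta_of_ne_zero
      (PZaux.coe_ne_zero ha)).differentiableOn).analyticOnNhd hU
  have hG : AnalyticOnNhd ℂ (PZaux.G a) {z : ℂ | 0 < z.re} :=
    (PZaux.differentiableOn_G ha).analyticOnNhd hU
  have h2mem : (2 : ℂ) ∈ {z : ℂ | 0 < z.re} := by norm_num
  have hev : (HurwitzZeta.expZeta (a : UnitAddCircle)) =ᶠ[nhds (2 : ℂ)] PZaux.G a := by
    have hopen : IsOpen {z : ℂ | 1 < z.re} := isOpen_lt continuous_const Complex.continuous_re
    have h2 : (2 : ℂ) ∈ {z : ℂ | 1 < z.re} := by norm_num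
    filter_upwards [hopen.mem_nhds h2] with z hz
    exact PZaux.eq_on_one_lt ha hz
  have heq := hF.eqOn_of_preconnected_of_eventuallyEq hG hconn h2mem hev
  have hfin : periodizedZeta s a = PZaux.G a s := heq hs1
  rw [hfin]
  exact PZaux.tendsto_partial ha hs1
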